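/- Let E be a directed graph in which no cycle has an entrance, and let v be a vertex lying on a cycle λ. Then there is exactly one infinite path with range v, namely the path obtained by repeating λ forever (starting at the appropriate position). -/

import Mathlib

/-- A directed graph: edges `E`, vertices `V`, range and source maps. -/
structure DirGraph where
  V : Type
  E : Type
  r : E → V
  s : E → V

/-- Shift an infinite path (sequence of edges) by `p`. -/
def shift (p : ℕ) {α : Type} (x : ℕ → α) : ℕ → α := fun i => x (i + p)

namespace DirGraph

variable (G : DirGraph)

/-- `IsPath G v l u` : the list of edges `l` is a finite path with range `v` and
source `u` (edges are composed so that `s eᵢ = r eᵢ₊₁`). -/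
inductive IsPath : G.V → List G.E → G.V → Prop
  | nil (v : G.V) : IsPath v [] v
  | cons (e : G.E) {l : List G.E} {u : G.V} :
      IsPath (G.s e) l u → IsPath (G.r e) (e :: l) u

/-- An infinite path: a sequence of edges with `s(xᵢ) = r(xᵢ₊₁)`. -/
def InfPath (x : ℕ → G.E) : Prop := ∀ i, G.s (x i) = G.r (x (i + 1))

/-- Prepend a finite path (list of edges) to an infinite path. -/
def prepend (l : List G.E) (x : ℕ → G.E) : ℕ → G.E :=
  fun i => if h : i < l.length then l.get ⟨i, h⟩ else x (i - l.length)

/-- A cycle: a nonempty finite path with equal range and source. -/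
def IsCycle (c : List G.E) : Prop := c ≠ [] ∧ ∃ u, G.IsPath u c u

/-- A finite path contains a cycle if some (contiguous) subpath is a cycle. -/
def ContainsCycle (l : List G.E) : Prop :=
  ∃ p c q, l = p ++ c ++ q ∧ G.IsCycle c

/-- A simple cycle: a cycle containing no other cycle as a proper subpath. -/
def IsSimpleCycle (c : List G.E) : Prop :=
  G.IsCycle c ∧ ∀ p c' q, c = p ++ c' ++ q → G.IsCycle c' → c' = c

/-- A pair of finite paths is minimal if no nontrivial common final segment
can be factored out. -/
def Minimal (a b : List G.E) : Prop :=
  ∀ a' b' n, a = a' ++ n → b = b' ++ n → n = []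

/-- No cycle of `G` has an entrance: for every edge `f` on a cycle, `f` is the
only edge with range `r f`. -/
def NoCycleHasEntrance : Prop :=
  ∀ u c, G.IsCycle c → G.IsPath u c u → ∀ f ∈ c, ∀ e, G.r e = G.r f → e = f

/-- Row-finite: every vertex receives only finitely many edges. -/
def RowFinite : Prop := ∀ v, {e : G.E | G.r e = v}.Finite

/-- No sources: every vertex receives an edge. -/
def NoSources : Prop := ∀ v : G.V, ∃ e, G.r e = v

/-- Minimal cycle-free ancestry pair for the vertices `v, w`. -/
def MCFPair (v w : G.V) (a b : List G.E) : Prop :=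
  (∃ u, G.IsPath v a u ∧ G.IsPath w b u) ∧ G.Minimal a b ∧
    ¬G.ContainsCycle a ∧ ¬G.ContainsCycle b

variable {G : DirGraph}

lemma isPath_r_head {v u : G.V} {l : List G.E} (h : G.IsPath v l u) (h0 : 0 < l.length) :
    G.r (l.get ⟨0, h0⟩) = v := by
  cases h with
  | nil => simp at h0
  | cons e hp => rfl

lemma isPath_s_get {v u : G.V} {l : List G.E} (h : G.IsPath v l u) (i : ℕ)
    (hi : i + 1 < l.length) :
    G.s (l.get ⟨i, by omega⟩) = G.r (l.get ⟨i + 1, hi⟩) := by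
  induction h generalizing i with
  | nil => simp at hi
  | @cons e l' u' hp ih =>
    cases i with
    | zero =>
      have h0 : 0 < l'.length := by simpa using hi
      simpa using (isPath_r_head hp h0).symm
    | succ j => exact ih j (by simpa using hi)

lemma isPath_nil' {v u : G.V} (h : G.IsPath v [] u) : v = u := by cases h; rfl

lemma isPath_s_last {v u : G.V} {l : List G.E} (h : G.IsPath v l u) (hl : 0 < l.length) :
    G.s (l.get ⟨l.length - 1, by omega⟩) = u := by
  induction h with
  | nil => simp at hl
  | @cons e l' u' hp ih =>
    cases l' with
    | nil =>
      simpa using isPath_nil' hp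
    | cons f t =>
      have := ih (by simp)
      simpa using this

lemma cycle_step {u : G.V} {c : List G.E} (hcy : G.IsPath u c u) (hc : c ≠ [])
    (i : ℕ) (hi : i < c.length) :
    G.s (c.get ⟨i, hi⟩) =
      G.r (c.get ⟨(i + 1) % c.length, Nat.mod_lt _ (List.length_pos_iff.mpr hc)⟩) := by
  have hn : 0 < c.length := List.length_pos_iff.mpr hc
  rcases Nat.lt_or_ge (i + 1) c.length with h | h
  · have heq : (⟨(i + 1) % c.length, Nat.mod_lt _ hn⟩ : Fin c.length) = ⟨i + 1, h⟩ :=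
      Fin.ext (Nat.mod_eq_of_lt h)
    rw [heq]
    exact isPath_s_get hcy i h
  · have hie : i = c.length - 1 := by omega
    subst hie
    have heq : (⟨(c.length - 1 + 1) % c.length, Nat.mod_lt _ hn⟩ : Fin c.length) = ⟨0, hn⟩ :=
      Fin.ext (by simp [Nat.sub_add_cancel hn])
    rw [heq, isPath_r_head hcy hn]
    exact isPath_s_last hcy hn

lemma get_eq {α : Type} (l : List α) {i j : ℕ} (h : i = j) (hi : i < l.length)
    (hj : j < l.length) : l.get ⟨i, hi⟩ = l.get ⟨j, hj⟩ := by subst h; rfl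

lemma mod_succ_eq (a n : ℕ) : (a % n + 1) % n = (a + 1) % n := by
  conv_rhs => rw [Nat.add_mod]
  rw [Nat.add_mod (a % n) 1 n, Nat.mod_mod_of_dvd a dvd_rfl]

end DirGraph

/-- If no cycle of `E` has an entrance and `v` lies on a cycle `c`
(as the range of its `k`-th edge), then the unique infinite path with range `v`
is the one obtained by repeating the cycle forever from position `k`. -/
theorem unique_infinite_path_on_cycle (G : DirGraph)
    (hnc : G.NoCycleHasEntrance) (c : List G.E) (u : G.V)
    (hc : c ≠ []) (hcy : G.IsPath u c u) (k : ℕ) (hk : k < c.length) :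
    (G.InfPath (fun i => c.get ⟨(k + i) % c.length, Nat.mod_lt _ (List.length_pos_of_ne_nil hc)⟩) ∧
      G.r ((fun i => c.get ⟨(k + i) % c.length, Nat.mod_lt _ (List.length_pos_of_ne_nil hc)⟩) 0) =
        G.r (c.get ⟨k, hk⟩)) ∧
    ∀ y : ℕ → G.E, G.InfPath y → G.r (y 0) = G.r (c.get ⟨k, hk⟩) →
      y = fun i => c.get ⟨(k + i) % c.length, Nat.mod_lt _ (List.length_pos_of_ne_nil hc)⟩ := by
  have hn : 0 < c.length := List.length_pos_iff.mpr hc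
  set x : ℕ → G.E := fun i => c.get ⟨(k + i) % c.length, Nat.mod_lt _ hn⟩ with hx
  have hinf : G.InfPath x := by
    intro i
    have h1 := DirGraph.cycle_step hcy hc ((k + i) % c.length) (Nat.mod_lt _ hn)
    have h2 : ((k + i) % c.length + 1) % c.length = (k + (i + 1)) % c.length := by
      rw [DirGraph.mod_succ_eq, Nat.add_assoc]
    show G.s (c.get ⟨(k + i) % c.length, Nat.mod_lt _ hn⟩) =
      G.r (c.get ⟨(k + (i + 1)) % c.length, Nat.mod_lt _ hn⟩)
    rw [h1]
    exact congrArg G.r (DirGraph.get_eq c h2 _ _)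
  have hk0 : (⟨(k + 0) % c.length, Nat.mod_lt _ hn⟩ : Fin c.length) = ⟨k, hk⟩ :=
    Fin.ext (by simp [Nat.mod_eq_of_lt hk])
  have hx0 : G.r (x 0) = G.r (c.get ⟨k, hk⟩) := by simp only [hx]; rw [hk0]
  refine ⟨⟨hinf, hx0⟩, ?_⟩
  intro y hy hy0
  have key : ∀ i, y i = x i := by
    intro i
    induction i with
    | zero =>
      exact hnc u c ⟨hc, u, hcy⟩ hcy (x 0) (List.get_mem _ _) (y 0) (by rw [hy0, ← hx0])
    | succ j ih =>
      have hr : G.r (y (j + 1)) = G.r (x (j + 1)) := by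
        rw [← hy j, ← hinf j, ih]
      exact hnc u c ⟨hc, u, hcy⟩ hcy (x (j + 1)) (List.get_mem _ _) (y (j + 1)) hr
  funext i
  exact key i
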